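/- (Chopping Lemma) Let G be a graph with independence number α(G) ≤ α, let x and y be two distinct vertices of G, and let P be an xy-path in G of order l. Then for every interval I of integers with I ⊆ [1, l] and |I| = 2α, there exists q ∈ I such that P has a q-reduction. -/

import Mathlib

open SimpleGraph

/-- The independence number of `G` is at most `r`. -/
def indepNumLE {V : Type*} (G : SimpleGraph V) (r : ℕ) : Prop :=
  ∀ s : Finset V, (∀ x ∈ s, ∀ y ∈ s, x ≠ y → ¬ G.Adj x y) → s.card ≤ r

private lemma support_getElem? {V : Type*} {G : SimpleGraph V} :
    ∀ {u v : V} (p : G.Walk u v) (i : ℕ), i ≤ p.length →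
      p.support[i]? = some (p.getVert i) := by
  intro u v p
  induction p with
  | nil =>
    intro i hi
    rw [SimpleGraph.Walk.length_nil] at hi
    interval_cases i
    simp [SimpleGraph.Walk.getVert]
  | cons h q ih =>
    intro i hi
    cases i with
    | zero => simp [SimpleGraph.Walk.getVert]
    | succ i =>
      rw [SimpleGraph.Walk.support_cons, SimpleGraph.Walk.getVert_cons_succ]
      simpa using ih i (by simpa using hi)

private lemma getVert_inj {V : Type*} {G : SimpleGraph V} {u v : V} {p : G.Walk u v}
    (hp : p.IsPath) {i j : ℕ} (hi : i ≤ p.length) (hj : j ≤ p.length)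
    (h : p.getVert i = p.getVert j) : i = j := by
  have h1 := support_getElem? p i hi
  have h2 := support_getElem? p j hj
  have hlen : i < p.support.length := by rw [SimpleGraph.Walk.length_support]; omega
  have hnd : p.support.Nodup := hp.support_nodup
  exact (List.getElem?_inj hlen hnd).mp (by rw [h1, h2, h])

private lemma shortcut_aux {V : Type*} {G : SimpleGraph V} {x : V} :
    ∀ (t : ℕ) {z y : V} (p : G.Walk z y), t ≤ p.length → G.Adj x (p.getVert t) →
      ∃ Q : G.Walk x y, Q.length + t = p.length + 1 ∧ Q.support.Sublist (x :: p.support) := by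
  intro t
  induction t with
  | zero =>
    intro z y p _ hadj
    rw [SimpleGraph.Walk.getVert_zero] at hadj
    exact ⟨Walk.cons hadj p, by simp, by simp⟩
  | succ t ih =>
    intro z y p hlen hadj
    cases p with
    | nil => simp at hlen
    | cons h q =>
      rw [SimpleGraph.Walk.getVert_cons_succ] at hadj
      obtain ⟨Q, hQl, hQs⟩ := ih q (by simpa using hlen) hadj
      refine ⟨Q, by simp only [SimpleGraph.Walk.length_cons]; omega, ?_⟩
      rw [SimpleGraph.Walk.support_cons]
      exact hQs.trans (List.Sublist.cons₂ x (List.sublist_cons_self _ _))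

private lemma shortcut {V : Type*} {G : SimpleGraph V} :
    ∀ (s t : ℕ) {x y : V} (p : G.Walk x y), s < t → t ≤ p.length →
      G.Adj (p.getVert s) (p.getVert t) →
      ∃ Q : G.Walk x y, Q.length + (t - s) = p.length + 1 ∧ Q.support.Sublist p.support := by
  intro s
  induction s with
  | zero =>
    intro t x y p hst hlen hadj
    cases p with
    | nil => rw [SimpleGraph.Walk.length_nil] at hlen; omega
    | cons h q =>
      cases t with
      | zero => omega
      | succ t =>
        rw [SimpleGraph.Walk.getVert_zero, SimpleGraph.Walk.getVert_cons_succ] at hadj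
        obtain ⟨Q, hQl, hQs⟩ := shortcut_aux t q (by simpa using hlen) hadj
        refine ⟨Q, by simp only [SimpleGraph.Walk.length_cons]; omega, ?_⟩
        rwa [SimpleGraph.Walk.support_cons]
  | succ s ih =>
    intro t x y p hst hlen hadj
    cases p with
    | nil => rw [SimpleGraph.Walk.length_nil] at hlen; omega
    | cons h q =>
      cases t with
      | zero => omega
      | succ t =>
        rw [SimpleGraph.Walk.getVert_cons_succ, SimpleGraph.Walk.getVert_cons_succ] at hadj
        obtain ⟨Q, hQl, hQs⟩ := ih t q (by omega) (by simpa using hlen) hadj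
        refine ⟨Walk.cons h Q, ?_, ?_⟩
        · rw [SimpleGraph.Walk.length_cons, SimpleGraph.Walk.length_cons]
          omega
        · rw [SimpleGraph.Walk.support_cons, SimpleGraph.Walk.support_cons]
          exact hQs.cons₂ x

/-- (Chopping Lemma) Let `G` be a graph with independence number at most `a`, let `x` and
`y` be two distinct vertices of `G`, and let `P` be an `xy`-path of order `l = P.length + 1`.
Then for every interval `I ⊆ [1, l]` of integers with `|I| = 2a`, there exists `q ∈ I` such
that `P` has a `q`-reduction, i.e. an `xy`-path of order `q` all of whose vertices belong
to `P`. -/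
theorem chopping_lemma {V : Type*} (G : SimpleGraph V) (a : ℕ) (hα : indepNumLE G a)
    (x y : V) (hxy : x ≠ y) (P : G.Walk x y) (hP : P.IsPath)
    (I : Finset ℕ) (hIint : ∃ m n : ℕ, I = Finset.Icc m n)
    (hIsub : I ⊆ Finset.Icc 1 (P.length + 1)) (hIcard : I.card = 2 * a) :
    ∃ q ∈ I, ∃ Q : G.Walk x y, Q.IsPath ∧ (∀ z ∈ Q.support, z ∈ P.support) ∧
      Q.length + 1 = q := by
  classical
  have ha : 1 ≤ a := by
    have := hα {x} (by
      intro u hu v hv huv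
      simp only [Finset.mem_singleton] at hu hv
      subst hu; subst hv; exact absurd rfl huv)
    simpa using this
  obtain ⟨m, n, rfl⟩ := hIint
  rw [Nat.card_Icc] at hIcard
  have hmn : m ≤ n := by omega
  have hm1 : 1 ≤ m := by
    have := hIsub (Finset.mem_Icc.mpr ⟨le_refl m, hmn⟩)
    exact (Finset.mem_Icc.mp this).1
  have hnP : n ≤ P.length + 1 := by
    have := hIsub (Finset.mem_Icc.mpr ⟨hmn, le_refl n⟩)
    exact (Finset.mem_Icc.mp this).2
  -- main claim by strong induction on the length of a reduction
  have key : ∀ k (Q : G.Walk x y), Q.length = k → Q.IsPath →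
      (∀ z ∈ Q.support, z ∈ P.support) → m ≤ Q.length + 1 →
      ∃ q ∈ Finset.Icc m n, ∃ Q' : G.Walk x y, Q'.IsPath ∧
        (∀ z ∈ Q'.support, z ∈ P.support) ∧ Q'.length + 1 = q := by
    intro k
    induction k using Nat.strong_induction_on with
    | _ k IH =>
      intro Q hk hQpath hQsub hmQ
      by_cases hle : Q.length + 1 ≤ n
      · exact ⟨Q.length + 1, Finset.mem_Icc.mpr ⟨hmQ, hle⟩, Q, hQpath, hQsub, rfl⟩
      · have hQlong : 2 * a ≤ Q.length := by omega
        have main : ∀ i j : ℕ, i < j → j ≤ a →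
            G.Adj (Q.getVert (2 * i)) (Q.getVert (2 * j)) →
            ∃ q ∈ Finset.Icc m n, ∃ Q' : G.Walk x y, Q'.IsPath ∧
              (∀ z ∈ Q'.support, z ∈ P.support) ∧ Q'.length + 1 = q := by
          intro i j hlt hja hadj
          obtain ⟨Q', hQ'l, hQ's⟩ := shortcut (2 * i) (2 * j) Q (by omega) (by omega) hadj
          have hsub' : ∀ z ∈ Q'.support, z ∈ P.support := fun z hz => hQsub z (hQ's.subset hz)
          have hpath' : Q'.IsPath := by
            rw [SimpleGraph.Walk.isPath_def]
            exact List.Nodup.sublist hQ's hQpath.support_nodup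
          exact IH Q'.length (by omega) Q' rfl hpath' hsub' (by omega)
        -- a+1 vertices at even positions; two of them must be adjacent
        set S : Finset V := (Finset.range (a + 1)).image (fun i => Q.getVert (2 * i)) with hS
        have hcard : S.card = a + 1 := by
          rw [hS, Finset.card_image_of_injOn, Finset.card_range]
          intro i hi j hj hij
          simp only [Finset.coe_range, Set.mem_Iio] at hi hj
          have := getVert_inj hQpath (by omega) (by omega) hij
          omega
        have hnotind : ¬ (∀ u ∈ S, ∀ v ∈ S, u ≠ v → ¬ G.Adj u v) := by
          intro h
          have := hα S h
          omega
        push_neg at hnotind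
        obtain ⟨u, hu, v, hv, huv, hadj⟩ := hnotind
        rw [hS, Finset.mem_image] at hu hv
        obtain ⟨i, hi, rfl⟩ := hu
        obtain ⟨j, hj, rfl⟩ := hv
        rw [Finset.mem_range] at hi hj
        have hij : i ≠ j := fun h => huv (by rw [h])
        rcases lt_or_gt_of_ne hij with h | h
        · exact main i j h (by omega) hadj
        · exact main j i h (by omega) hadj.symm
  have := key P.length P rfl hP (fun z hz => hz) (by omega)
  obtain ⟨q, hq, Q', h1, h2, h3⟩ := this
  exact ⟨q, hq, Q', h1, h2, h3⟩
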